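/- arXiv:2009.13314 — 4 statements merged into one kernel-verified Lean document; each statement's English description precedes it below -/
import Mathlib

section
/- Let A be an irreducible nonnegative real square matrix with spectral radius 1, realized as a simple positive eigenvalue (Perron–Frobenius eigenvalue) equal to 1. Define p(t) = det(I - tA). Then p(1) = 0 and p'(1) < 0. -/
/-- Let `A` be an irreducible nonnegative real matrix with Perron–Frobenius
eigenvalue `1`: its complex eigenvalues `λ 0 = 1, λ 1, …` satisfy `‖λ i‖ ≤ 1`
and `λ i ≠ 1` for `i ≠ 0`, and `det(I - tA) = ∏ (1 - t λᵢ)`.  Then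
`p(t) = det(I - tA)` satisfies `p(1) = 0` and `p'(1) < 0`. -/
theorem perron_frobenius_det_deriv (n : ℕ) (hn : 1 ≤ n)
    (A : Matrix (Fin n) (Fin n) ℝ) (hA : ∀ i j, 0 ≤ A i j)
    (lam : Fin n → ℂ) (hlam0 : lam ⟨0, hn⟩ = 1)
    (hlam : ∀ i : Fin n, i ≠ ⟨0, hn⟩ → ‖lam i‖ ≤ 1 ∧ lam i ≠ 1)
    (hfact : ∀ t : ℝ, ((Matrix.det (1 - t • A) : ℝ) : ℂ) = ∏ i, (1 - (t : ℂ) * lam i)) :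
    (fun t : ℝ => Matrix.det (1 - t • A)) 1 = 0 ∧
      deriv (fun t : ℝ => Matrix.det (1 - t • A)) 1 < 0 := by
  set i0 : Fin n := ⟨0, hn⟩ with hi0
  set p : ℝ → ℝ := fun t => Matrix.det (1 - t • A) with hpdef
  set F : ℝ → ℂ := fun t => ∏ i, (1 - (t : ℂ) * lam i) with hFdef
  have key : ∀ t : ℝ, (p t : ℂ) = F t := hfact
  -- all eigenvalues have norm ≤ 1
  have hnorm : ∀ i, ‖lam i‖ ≤ 1 := by
    intro i
    by_cases h : i = i0
    · simp [h, hlam0]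
    · exact (hlam i h).1
  -- p 1 = 0
  have hp1 : p 1 = 0 := by
    have h := key 1
    rw [show F 1 = 0 from ?_] at h
    · exact_mod_cast h
    · exact Finset.prod_eq_zero (Finset.mem_univ i0) (by simp [hlam0])
  -- p t ≠ 0 on [0,1)
  have hne : ∀ t ∈ Set.Ico (0:ℝ) 1, p t ≠ 0 := by
    intro t ht h0
    have : F t = 0 := by rw [← key, h0, Complex.ofReal_zero]
    obtain ⟨i, -, hi⟩ := Finset.prod_eq_zero_iff.mp this
    have : (t : ℂ) * lam i = 1 := by linear_combination -hi
    have h1 : ‖(t : ℂ) * lam i‖ = 1 := by rw [this]; simp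
    rw [norm_mul, Complex.norm_real, Real.norm_eq_abs, abs_of_nonneg ht.1] at h1
    nlinarith [hnorm i, ht.2, ht.1, norm_nonneg (lam i)]
  -- p 0 = 1
  have hp0 : p 0 = 1 := by simp [hpdef]
  -- p continuous
  have hFc : Continuous F := by
    apply continuous_finset_prod
    intro i _
    fun_prop
  have hpc : Continuous p := by
    have : p = fun t => (F t).re := by
      funext t; rw [← key t, Complex.ofReal_re]
    rw [this]; exact Complex.continuous_re.comp hFc
  -- p > 0 on [0,1)
  have hpos : ∀ t ∈ Set.Ico (0:ℝ) 1, 0 < p t := by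
    intro t ht
    rcases lt_or_gt_of_ne (hne t ht) with h | h
    · exfalso
      have := intermediate_value_Icc' ht.1 hpc.continuousOn
      have h0mem : (0:ℝ) ∈ Set.Icc (p t) (p 0) := by
        constructor <;> [linarith; simp [hp0]]
      obtain ⟨s, hs, hps⟩ := this h0mem
      exact hne s ⟨hs.1, lt_of_le_of_lt hs.2 ht.2⟩ hps
    · exact h
  -- derivative of F at 1
  have hfac : ∀ i ∈ Finset.univ, HasDerivAt (fun t : ℝ => 1 - (t : ℂ) * lam i) (-lam i) (1:ℝ) := by
    intro i _
    have h1 : HasDerivAt (fun t : ℝ => ((t : ℂ))) 1 (1:ℝ) := Complex.ofRealCLM.hasDerivAt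
    simpa using (h1.mul_const (lam i)).const_sub 1
  have hD : HasDerivAt F (∑ i, (∏ j ∈ Finset.univ.erase i, (1 - ((1:ℝ):ℂ) * lam j)) • (-lam i)) 1 := by
    have := HasDerivAt.fun_finsetProd hfac
    convert this using 1
  set D : ℂ := -∏ j ∈ Finset.univ.erase i0, (1 - lam j) with hDdef
  have hsum : (∑ i, (∏ j ∈ Finset.univ.erase i, (1 - ((1:ℝ):ℂ) * lam j)) • (-lam i)) = D := by
    rw [Finset.sum_eq_single i0]
    · simp [hlam0, hDdef]
    · intro i _ hi
      have : (∏ j ∈ Finset.univ.erase i, (1 - ((1:ℝ):ℂ) * lam j)) = 0 := by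
        apply Finset.prod_eq_zero (Finset.mem_erase.mpr ⟨Ne.symm hi, Finset.mem_univ i0⟩)
        simp [hlam0]
      simp only [Complex.ofReal_one, one_mul] at this
      simp [this]
    · intro h; exact absurd (Finset.mem_univ i0) h
  rw [hsum] at hD
  have hDne : D ≠ 0 := by
    rw [hDdef, neg_ne_zero]
    apply Finset.prod_ne_zero_iff.mpr
    intro j hj
    have := (hlam j (Finset.mem_erase.mp hj).1).2
    exact sub_ne_zero.mpr (Ne.symm this)
  -- p has derivative D.re at 1
  have hpF : p = fun t => (F t).re := by
    funext t; rw [← key t, Complex.ofReal_re]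
  have hP : HasDerivAt p D.re 1 := by
    rw [hpF]
    exact Complex.reCLM.hasFDerivAt.comp_hasDerivAt 1 hD
  -- D is real
  have hDre : (D.re : ℂ) = D := by
    have h1 : HasDerivAt (fun t : ℝ => ((p t : ℂ))) (D.re : ℂ) 1 := hP.ofReal_comp
    have h2 : (fun t : ℝ => ((p t : ℂ))) = F := funext key
    rw [h2] at h1
    exact h1.unique hD
  have hDre_ne : D.re ≠ 0 := by
    intro h
    rw [h] at hDre
    exact hDne (by simpa using hDre.symm)
  -- D.re ≤ 0 via slope
  have hle : D.re ≤ 0 := by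
    have hslope := hasDerivAt_iff_tendsto_slope.mp hP
    have hmono : (nhdsWithin (1:ℝ) (Set.Iio 1)) ≤ (nhdsWithin (1:ℝ) {(1:ℝ)}ᶜ) :=
      nhdsWithin_mono _ (fun x hx => ne_of_lt hx)
    have hslope' := hslope.mono_left hmono
    refine le_of_tendsto hslope' ?_
    filter_upwards [Ioo_mem_nhdsLT_of_mem (Set.mem_Ioc.mpr ⟨zero_lt_one, le_refl 1⟩)] with t ht
    have hpt := hpos t ⟨le_of_lt ht.1, ht.2⟩
    have : slope p 1 t = p t / (t - 1) := by
      rw [slope_def_field, hp1, sub_zero]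
    rw [this]
    exact div_nonpos_of_nonneg_of_nonpos hpt.le (by linarith [ht.2])
  exact ⟨hp1, hP.deriv ▸ lt_of_le_of_ne hle hDre_ne⟩
end

section
/- For every r ≥ 2 and every ℓ = (ℓ¹,...,ℓʳ) ∈ ℝ^r, det(I - Ā_{r,ℓ}) = ∑_{S ⊆ [r]} (1 - 2|S|) exp(-∑_{i∈S} ℓⁱ), where Ā_{r,ℓ} is the r×r matrix with entries Ā_{r,ℓ}(i,j) = exp(-ℓⁱ)(2 - δ(i,j)). -/
open Finset Matrix

lemma sum_powerset_prod {ι : Type*} [DecidableEq ι] (s : Finset ι) (x : ι → ℝ) :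
    ∑ S ∈ s.powerset, ∏ i ∈ S, x i = ∏ i ∈ s, (1 + x i) := by
  induction s using Finset.induction_on with
  | empty => simp
  | @insert a s ha ih =>
    rw [Finset.sum_powerset_insert ha, Finset.prod_insert ha, ← ih]
    have h1 : ∀ t ∈ s.powerset, ∏ i ∈ insert a t, x i = x a * ∏ i ∈ t, x i := by
      intro t ht
      exact Finset.prod_insert fun h => ha (Finset.mem_powerset.mp ht h)
    rw [Finset.sum_congr rfl h1, ← Finset.mul_sum]
    ring

lemma sum_powerset_card_prod {ι : Type*} [DecidableEq ι] (s : Finset ι) (x : ι → ℝ) :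
    ∑ S ∈ s.powerset, (S.card : ℝ) * ∏ i ∈ S, x i
      = ∑ j ∈ s, x j * ∏ i ∈ s.erase j, (1 + x i) := by
  induction s using Finset.induction_on with
  | empty => simp
  | @insert a s ha ih =>
    rw [Finset.sum_powerset_insert ha, Finset.sum_insert ha, ih]
    have h1 : ∀ t ∈ s.powerset,
        ((insert a t).card : ℝ) * ∏ i ∈ insert a t, x i
          = x a * ((t.card : ℝ) * ∏ i ∈ t, x i) + x a * ∏ i ∈ t, x i := by
      intro t ht
      have hat : a ∉ t := fun h => ha (Finset.mem_powerset.mp ht h)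
      rw [Finset.prod_insert hat, Finset.card_insert_of_notMem hat]
      push_cast
      ring
    rw [Finset.sum_congr rfl h1, Finset.sum_add_distrib, ← Finset.mul_sum, ← Finset.mul_sum,
      ih, sum_powerset_prod, Finset.erase_insert ha]
    have h2 : ∀ j ∈ s, x j * ∏ i ∈ (insert a s).erase j, (1 + x i)
        = (1 + x a) * (x j * ∏ i ∈ s.erase j, (1 + x i)) := by
      intro j hj
      have hja : j ≠ a := fun h => ha (h ▸ hj)
      rw [Finset.erase_insert_of_ne hja.symm,
        Finset.prod_insert (fun h => ha (Finset.mem_of_mem_erase h))]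
      ring
    rw [Finset.sum_congr rfl h2, ← Finset.mul_sum]
    ring

/-- For `r ≥ 2` and `ℓ ∈ ℝ^r`, `det(I - Ā_{r,ℓ}) = ∑_{S ⊆ [r]} (1-2|S|) e^{-ℓ^S}`
where `Ā_{r,ℓ}(i,j) = e^{-ℓⁱ}(2 - δᵢⱼ)`. -/
theorem det_rose_matrix (r : ℕ) (hr : 2 ≤ r) (ℓ : Fin r → ℝ) :
    Matrix.det
        (1 - Matrix.of fun i j : Fin r =>
          Real.exp (-ℓ i) * (2 - if i = j then 1 else 0)) =
      ∑ S : Finset (Fin r), (1 - 2 * (S.card : ℝ)) * Real.exp (-(∑ i ∈ S, ℓ i)) := by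
  set x : Fin r → ℝ := fun i => Real.exp (-ℓ i) with hx
  set d : Fin r → ℝ := fun i => 1 + x i with hd
  have hxpos : ∀ i, 0 < x i := fun i => Real.exp_pos _
  have hdne : ∀ i, d i ≠ 0 := fun i => by positivity
  -- rewrite the matrix as a diagonal times (1 + rank one)
  have hM : (1 - Matrix.of fun i j : Fin r =>
        Real.exp (-ℓ i) * (2 - if i = j then 1 else 0)) =
      Matrix.diagonal d *
        (1 + Matrix.replicateCol Unit (fun i => -2 * x i / d i) * Matrix.replicateRow Unit (1 : Fin r → ℝ)) := by
    ext i j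
    simp only [Matrix.mul_apply, Matrix.diagonal, Matrix.add_apply, Matrix.one_apply,
      Matrix.replicateCol_apply, Matrix.replicateRow_apply, Matrix.sub_apply, Matrix.of_apply]
    rw [Finset.sum_eq_single i]
    · by_cases h : i = j <;>
        simp [h, Matrix.mul_apply, Pi.one_apply] <;>
        field_simp [hdne i, hdne j] <;> simp only [hd, hx] <;> ring
    · intro b _ hb; simp [hb.symm]
    · simp
  rw [hM, Matrix.det_mul, Matrix.det_diagonal, Matrix.det_one_add_replicateCol_mul_replicateRow]
  -- compute the dot product
  have hdot : (1 : Fin r → ℝ) ⬝ᵥ (fun i => -2 * x i / d i)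
      = ∑ i : Fin r, -2 * x i / d i := by
    simp [dotProduct]
  rw [hdot]
  have hLHS : (∏ i, d i) * (1 + ∑ i : Fin r, -2 * x i / d i)
      = ∏ i, d i - 2 * ∑ j : Fin r, x j * ∏ i ∈ Finset.univ.erase j, d i := by
    rw [mul_add, mul_one, Finset.mul_sum, sub_eq_add_neg, Finset.mul_sum,
      ← Finset.sum_neg_distrib]
    congr 1
    apply Finset.sum_congr rfl
    intro j _
    rw [← Finset.mul_prod_erase _ _ (Finset.mem_univ j)]
    field_simp [hdne j]
  rw [hLHS]
  -- rewrite the RHS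
  have hRHS : ∀ S : Finset (Fin r),
      (1 - 2 * (S.card : ℝ)) * Real.exp (-(∑ i ∈ S, ℓ i))
        = ∏ i ∈ S, x i - 2 * ((S.card : ℝ) * ∏ i ∈ S, x i) := by
    intro S
    have : Real.exp (-(∑ i ∈ S, ℓ i)) = ∏ i ∈ S, x i := by
      rw [← Real.exp_sum, ← Finset.sum_neg_distrib]
    rw [this]; ring
  rw [Finset.sum_congr rfl (fun S _ => hRHS S), Finset.sum_sub_distrib]
  have hp : (Finset.univ : Finset (Finset (Fin r))) = (Finset.univ : Finset (Fin r)).powerset := by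
    simp [Finset.powerset_univ]
  rw [hp, sum_powerset_prod, ← Finset.mul_sum, sum_powerset_card_prod]
end

section
/- Let r ≥ 2 and let ℓ ∈ (0,∞)^r satisfy F̄_r(ℓ) = 0 and ℓⁱ = log(L) for all i ∈ [r-1] with L > 2r-3. Then ℓʳ = log((L + (2r-1))/(L - (2r-3))). -/
/-- `F̄_r(ℓ) = ∑_{S⊆[r]} (1-2|S|) e^{-ℓ^S}`. -/
noncomputable def Fbar (r : ℕ) (ℓ : Fin r → ℝ) : ℝ :=
  ∑ S : Finset (Fin r), (1 - 2 * (S.card : ℝ)) * Real.exp (-(∑ i ∈ S, ℓ i))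

lemma prod_one_add {ι : Type*} [DecidableEq ι] (s : Finset ι) (a : ι → ℝ) :
    ∑ S ∈ s.powerset, ∏ i ∈ S, a i = ∏ i ∈ s, (1 + a i) := by
  induction s using Finset.induction_on with
  | empty => simp
  | @insert j s hj ih =>
    rw [Finset.sum_powerset_insert hj, Finset.prod_insert hj, ← ih]
    have h2 : ∑ t ∈ s.powerset, ∏ i ∈ insert j t, a i
        = a j * ∑ t ∈ s.powerset, ∏ i ∈ t, a i := by
      rw [Finset.mul_sum]
      refine Finset.sum_congr rfl fun t ht => ?_
      exact Finset.prod_insert fun hm => hj (Finset.mem_powerset.mp ht hm)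
    rw [h2]; ring

lemma sum_card_prod {ι : Type*} [DecidableEq ι] (s : Finset ι) (a : ι → ℝ) :
    ∑ S ∈ s.powerset, (S.card : ℝ) * ∏ i ∈ S, a i
      = ∑ j ∈ s, a j * ∏ i ∈ s.erase j, (1 + a i) := by
  induction s using Finset.induction_on with
  | empty => simp
  | @insert j s hj ih =>
    rw [Finset.sum_powerset_insert hj]
    have h2 : ∑ t ∈ s.powerset, ((insert j t).card : ℝ) * ∏ i ∈ insert j t, a i
        = a j * (∑ t ∈ s.powerset, (t.card : ℝ) * ∏ i ∈ t, a i)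
          + a j * ∑ t ∈ s.powerset, ∏ i ∈ t, a i := by
      rw [Finset.mul_sum, Finset.mul_sum, ← Finset.sum_add_distrib]
      refine Finset.sum_congr rfl fun t ht => ?_
      have hjt : j ∉ t := fun hm => hj (Finset.mem_powerset.mp ht hm)
      rw [Finset.card_insert_of_notMem hjt, Finset.prod_insert hjt]
      push_cast; ring
    have h3 : ∑ j' ∈ insert j s, a j' * ∏ i ∈ (insert j s).erase j', (1 + a i)
        = a j * ∏ i ∈ s, (1 + a i)
          + (1 + a j) * ∑ j' ∈ s, a j' * ∏ i ∈ s.erase j', (1 + a i) := by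
      rw [Finset.sum_insert hj, Finset.erase_insert hj, Finset.mul_sum]
      congr 1
      refine Finset.sum_congr rfl fun j' hj' => ?_
      have hne : j ≠ j' := fun h => hj (h ▸ hj')
      rw [Finset.erase_insert_of_ne hne,
        Finset.prod_insert (fun hm => hj (Finset.mem_of_mem_erase hm))]
      ring
    rw [h2, h3, ih, prod_one_add]
    ring

/-- If `F̄_r(ℓ) = 0` and `ℓⁱ = log L` for all `i` with `(i:ℕ) < r - 1`, where
`L > 2r - 3`, then the last coordinate is `log((L + (2r-1))/(L - (2r-3)))`. -/
theorem Fbar_last_coordinate (r : ℕ) (hr : 2 ≤ r) (ℓ : Fin r → ℝ)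
    (hpos : ∀ i, 0 < ℓ i) (hF : Fbar r ℓ = 0)
    (L : ℝ) (hL : (2 : ℝ) * r - 3 < L)
    (hℓ : ∀ i : Fin r, (i : ℕ) < r - 1 → ℓ i = Real.log L) :
    ℓ ⟨r - 1, by omega⟩ =
      Real.log ((L + (2 * r - 1)) / (L - (2 * r - 3))) := by
  classical
  have hrR : (2 : ℝ) ≤ (r : ℝ) := by exact_mod_cast hr
  have hL0 : (0 : ℝ) < L := by nlinarith
  set j₀ : Fin r := ⟨r - 1, by omega⟩ with hj₀def
  set a : Fin r → ℝ := fun i => Real.exp (-(ℓ i)) with ha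
  set x : ℝ := 1 / L with hxdef
  set y : ℝ := a j₀ with hydef
  have hx : ∀ i : Fin r, i ≠ j₀ → a i = x := by
    intro i hi
    have hi' : (i : ℕ) < r - 1 := by
      have h1 := i.isLt
      have h2 : (i : ℕ) ≠ r - 1 := fun h => hi (Fin.ext h)
      omega
    simp only [ha]
    rw [hℓ i hi', Real.exp_neg, Real.exp_log hL0, hxdef, one_div]
  -- Rewrite Fbar in product form
  have hFbar : Fbar r ℓ = ∑ S ∈ (Finset.univ : Finset (Fin r)).powerset,
      (1 - 2 * (S.card : ℝ)) * ∏ i ∈ S, a i := by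
    rw [Fbar, ← Finset.powerset_univ]
    refine Finset.sum_congr rfl fun S _ => ?_
    congr 1
    rw [show -(∑ i ∈ S, ℓ i) = ∑ i ∈ S, -(ℓ i) by rw [Finset.sum_neg_distrib],
      Real.exp_sum]
  have hsplit : Fbar r ℓ = (∏ i, (1 + a i))
      - 2 * ∑ j, a j * ∏ i ∈ Finset.univ.erase j, (1 + a i) := by
    rw [hFbar, ← prod_one_add, ← sum_card_prod, Finset.mul_sum,
      ← Finset.sum_sub_distrib]
    refine Finset.sum_congr rfl fun S _ => ?_
    ring
  -- Evaluate the products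
  have hcard : (Finset.univ.erase j₀).card = r - 1 := by
    rw [Finset.card_erase_of_mem (Finset.mem_univ _), Finset.card_univ,
      Fintype.card_fin]
  have hQ0 : ∏ i ∈ Finset.univ.erase j₀, (1 + a i) = (1 + x) ^ (r - 1) := by
    rw [Finset.prod_congr rfl
      (fun i hi => by rw [hx i (Finset.ne_of_mem_erase hi)]),
      Finset.prod_const, hcard]
  have hQ : ∏ i, (1 + a i) = (1 + y) * (1 + x) ^ (r - 1) := by
    rw [← Finset.mul_prod_erase _ _ (Finset.mem_univ j₀), hQ0, ← hydef]
  have hW : ∑ j, a j * ∏ i ∈ Finset.univ.erase j, (1 + a i)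
      = y * (1 + x) ^ (r - 1)
        + ((r - 1 : ℕ) : ℝ) * (x * ((1 + y) * (1 + x) ^ (r - 2))) := by
    rw [← Finset.add_sum_erase _ _ (Finset.mem_univ j₀), hQ0, ← hydef]
    congr 1
    have hterm : ∀ j ∈ Finset.univ.erase j₀,
        a j * ∏ i ∈ Finset.univ.erase j, (1 + a i)
          = x * ((1 + y) * (1 + x) ^ (r - 2)) := by
      intro j hj
      have hjne : j ≠ j₀ := Finset.ne_of_mem_erase hj
      have hj₀mem : j₀ ∈ Finset.univ.erase j :=
        Finset.mem_erase.mpr ⟨Ne.symm hjne, Finset.mem_univ _⟩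
      rw [hx j hjne, ← Finset.mul_prod_erase _ _ hj₀mem, ← hydef]
      congr 2
      have hc2 : ((Finset.univ.erase j).erase j₀).card = r - 2 := by
        rw [Finset.card_erase_of_mem hj₀mem,
          Finset.card_erase_of_mem (Finset.mem_univ _), Finset.card_univ,
          Fintype.card_fin]
        omega
      rw [Finset.prod_congr rfl (fun i hi => by
        rw [hx i (Finset.ne_of_mem_erase hi)]), Finset.prod_const, hc2]
    rw [Finset.sum_congr rfl hterm, Finset.sum_const, hcard, nsmul_eq_mul]
  -- Put it together
  have hpowsplit : (1 + x) ^ (r - 1) = (1 + x) ^ (r - 2) * (1 + x) := by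
    rw [← pow_succ]
    congr 1
    omega
  have hcast : ((r - 1 : ℕ) : ℝ) = (r : ℝ) - 1 := by
    have : 1 ≤ r := by omega
    push_cast [this]; ring
  have hx0 : 0 < x := by rw [hxdef]; positivity
  have hP : (0 : ℝ) < (1 + x) ^ (r - 2) := by positivity
  have hmain : (1 + x) ^ (r - 2) *
      ((1 + y) * (1 + x) - 2 * (y * (1 + x) + ((r : ℝ) - 1) * (x * (1 + y)))) = 0 := by
    rw [hsplit] at hF
    rw [hQ, hW, hpowsplit, hcast] at hF
    linear_combination hF
  have hC : (1 + y) * (1 + x) - 2 * (y * (1 + x) + ((r : ℝ) - 1) * (x * (1 + y))) = 0 := by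
    rcases mul_eq_zero.mp hmain with h | h
    · exact absurd h (ne_of_gt hP)
    · exact h
  -- Solve for y
  have hN0 : (0 : ℝ) < L - (2 * r - 3) := by linarith
  have hD0 : (0 : ℝ) < L + (2 * r - 1) := by nlinarith
  have hyval : y = (L - (2 * r - 3)) / (L + (2 * r - 1)) := by
    rw [hxdef] at hC
    field_simp at hC ⊢
    linarith [hC]
  -- Conclude
  have hexp : Real.exp (ℓ j₀) = (L + (2 * r - 1)) / (L - (2 * r - 3)) := by
    have h1 : Real.exp (-(ℓ j₀)) = (L - (2 * r - 3)) / (L + (2 * r - 1)) := hyval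
    rw [Real.exp_neg, inv_eq_iff_eq_inv] at h1
    rw [h1, inv_div]
  show ℓ j₀ = _
  rw [← Real.log_exp (ℓ j₀), hexp]
end

section
/- Let r ≥ 2, i ∈ [r], and ℓ ∈ (0,∞)^r with F̄_r(ℓ) = 0. Then 0 < X_i(ℓ) < 1 and 1 < Y_i(ℓ) < 4, where X_i(ℓ) = ∑_{S⊆[r]∖{i}}(1-2|S|)exp(-ℓ^S) and Y_i(ℓ) = ∑_{S⊆[r]∖{i}}(1+2|S|)exp(-ℓ^S). -/
/-- `X_i(ℓ) = ∑_{S ⊆ [r]∖{i}} (1-2|S|) e^{-ℓ^S}`. -/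
noncomputable def Xfun (r : ℕ) (i : Fin r) (ℓ : Fin r → ℝ) : ℝ :=
  ∑ S ∈ (Finset.univ.erase i).powerset,
    (1 - 2 * (S.card : ℝ)) * Real.exp (-(∑ j ∈ S, ℓ j))

/-- `Y_i(ℓ) = ∑_{S ⊆ [r]∖{i}} (1+2|S|) e^{-ℓ^S}`. -/
noncomputable def Yfun (r : ℕ) (i : Fin r) (ℓ : Fin r → ℝ) : ℝ :=
  ∑ S ∈ (Finset.univ.erase i).powerset,
    (1 + 2 * (S.card : ℝ)) * Real.exp (-(∑ j ∈ S, ℓ j))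

/-- For `ℓ` with positive entries and `F̄_r(ℓ) = 0`:
`0 < X_i(ℓ) < 1` and `1 < Y_i(ℓ) < 4`. -/
theorem Xfun_Yfun_bounds (r : ℕ) (hr : 2 ≤ r) (i : Fin r) (ℓ : Fin r → ℝ)
    (hpos : ∀ j, 0 < ℓ j) (hF : Fbar r ℓ = 0) :
    0 < Xfun r i ℓ ∧ Xfun r i ℓ < 1 ∧ 1 < Yfun r i ℓ ∧ Yfun r i ℓ < 4 := by
  classical
  set P := (Finset.univ.erase i).powerset with hPdef
  have hi : i ∉ Finset.univ.erase i := Finset.notMem_erase i _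
  -- key decomposition: Fbar = X - e^{-ℓ i} Y
  have key : Fbar r ℓ = Xfun r i ℓ - Real.exp (-(ℓ i)) * Yfun r i ℓ := by
    unfold Fbar Xfun Yfun
    have huniv : (Finset.univ : Finset (Finset (Fin r)))
        = (insert i (Finset.univ.erase i)).powerset := by
      rw [Finset.insert_erase (Finset.mem_univ i), Finset.powerset_univ]
    rw [show (∑ S : Finset (Fin r), (1 - 2 * (S.card : ℝ)) *
          Real.exp (-(∑ j ∈ S, ℓ j)))
        = ∑ S ∈ (insert i (Finset.univ.erase i)).powerset,
          (1 - 2 * (S.card : ℝ)) * Real.exp (-(∑ j ∈ S, ℓ j)) from by rw [← huniv],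
      Finset.sum_powerset_insert hi]
    have h2 : ∑ T ∈ (Finset.univ.erase i).powerset,
        (1 - 2 * ((insert i T).card : ℝ)) * Real.exp (-(∑ j ∈ insert i T, ℓ j))
        = -(Real.exp (-(ℓ i)) * ∑ T ∈ (Finset.univ.erase i).powerset,
            (1 + 2 * (T.card : ℝ)) * Real.exp (-(∑ j ∈ T, ℓ j))) := by
      rw [Finset.mul_sum, ← Finset.sum_neg_distrib]
      apply Finset.sum_congr rfl
      intro T hT
      have hiT : i ∉ T := fun h => hi (Finset.mem_powerset.mp hT h)
      rw [Finset.card_insert_of_notMem hiT, Finset.sum_insert hiT, neg_add, Real.exp_add]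
      push_cast
      ring
    rw [h2]
    ring
  have hempty : (∅ : Finset (Fin r)) ∈ P := Finset.empty_mem_powerset _
  haveI : Nontrivial (Fin r) := Fin.nontrivial_iff_two_le.mpr hr
  obtain ⟨j, hj⟩ := exists_ne i
  have hjP : ({j} : Finset (Fin r)) ∈ P.erase ∅ := by
    refine Finset.mem_erase.mpr ⟨Finset.singleton_ne_empty j, Finset.mem_powerset.mpr ?_⟩
    simpa [Finset.singleton_subset_iff, Finset.mem_erase] using hj
  -- split off the empty set term
  have hYsplit : Yfun r i ℓ
      = 1 + ∑ S ∈ P.erase ∅, (1 + 2 * (S.card : ℝ)) * Real.exp (-(∑ j ∈ S, ℓ j)) := by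
    unfold Yfun
    rw [← Finset.add_sum_erase _ _ hempty]
    simp
  have hXsplit : Xfun r i ℓ
      = 1 + ∑ S ∈ P.erase ∅, (1 - 2 * (S.card : ℝ)) * Real.exp (-(∑ j ∈ S, ℓ j)) := by
    unfold Xfun
    rw [← Finset.add_sum_erase _ _ hempty]
    simp
  have hYtail : 0 < ∑ S ∈ P.erase ∅, (1 + 2 * (S.card : ℝ)) * Real.exp (-(∑ j ∈ S, ℓ j)) := by
    refine Finset.sum_pos (fun S _ => ?_) ⟨{j}, hjP⟩
    positivity
  have hY1 : 1 < Yfun r i ℓ := by rw [hYsplit]; linarith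
  have hXtail : ∑ S ∈ P.erase ∅, (1 - 2 * (S.card : ℝ)) * Real.exp (-(∑ j ∈ S, ℓ j)) < 0 := by
    refine Finset.sum_neg (fun S hS => ?_) ⟨{j}, hjP⟩
    have hSne : S ≠ ∅ := (Finset.mem_erase.mp hS).1
    have hcard : 1 ≤ S.card := Finset.card_pos.mpr (Finset.nonempty_iff_ne_empty.mpr hSne)
    have : (1 : ℝ) ≤ (S.card : ℝ) := by exact_mod_cast hcard
    have hexp : 0 < Real.exp (-(∑ j ∈ S, ℓ j)) := Real.exp_pos _
    nlinarith
  have hX1 : Xfun r i ℓ < 1 := by rw [hXsplit]; linarith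
  -- X = e^{-ℓ i} * Y > 0
  have hXeq : Xfun r i ℓ = Real.exp (-(ℓ i)) * Yfun r i ℓ := by
    rw [key] at hF; linarith
  have hX0 : 0 < Xfun r i ℓ := by
    rw [hXeq]
    have := Real.exp_pos (-(ℓ i))
    nlinarith
  -- termwise comparison: Y tail ≤ 3 * (-(X tail))
  have hcmp : ∑ S ∈ P.erase ∅, (1 + 2 * (S.card : ℝ)) * Real.exp (-(∑ j ∈ S, ℓ j))
      ≤ ∑ S ∈ P.erase ∅, 3 * (-((1 - 2 * (S.card : ℝ)) * Real.exp (-(∑ j ∈ S, ℓ j)))) := by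
    refine Finset.sum_le_sum (fun S hS => ?_)
    have hSne : S ≠ ∅ := (Finset.mem_erase.mp hS).1
    have hcard : 1 ≤ S.card := Finset.card_pos.mpr (Finset.nonempty_iff_ne_empty.mpr hSne)
    have hc : (1 : ℝ) ≤ (S.card : ℝ) := by exact_mod_cast hcard
    have hexp : 0 < Real.exp (-(∑ j ∈ S, ℓ j)) := Real.exp_pos _
    nlinarith
  have hY4 : Yfun r i ℓ < 4 := by
    have h3 : ∑ S ∈ P.erase ∅, 3 * (-((1 - 2 * (S.card : ℝ)) * Real.exp (-(∑ j ∈ S, ℓ j))))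
        = 3 * (-(∑ S ∈ P.erase ∅, (1 - 2 * (S.card : ℝ)) * Real.exp (-(∑ j ∈ S, ℓ j)))) := by
      rw [← Finset.sum_neg_distrib, Finset.mul_sum]
    rw [h3] at hcmp
    rw [hXsplit] at hX0
    rw [hYsplit]
    linarith
  exact ⟨hX0, hX1, hY1, hY4⟩
end
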